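/- Addition theorem for inductive posets: let P be a locally geometric poset with at least one atom, let a ∈ A(P), and set P' = P(A(P)∖{a}), P'' = P_{≥a}. (a) If rk(P) = rk(P') (a is not a separator), P'' ∈ IP with exp(P'') = {d_1, …, d_{ℓ−1}}, and P' ∈ IP with exp(P') = {d_1, …, d_{ℓ−1}, d_ℓ}, then P ∈ IP with exp(P) = {d_1, …, d_{ℓ−1}, d_ℓ + 1}. (b) If rk(P) = rk(P') + 1 (a is a separator), P'' ∈ IP and P' ∈ IP with exp(P'') = exp(P') = {d_1, …, d_{ℓ−1}}, then P ∈ IP with exp(P) = {1, d_1, …, d_{ℓ−1}}. -/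

import Mathlib

open scoped Classical
open Polynomial

noncomputable section

namespace PosetArr

/-- The rank of an element of a poset: the length of the longest chain
strictly below it. In a ranked poset this is the common length of all maximal
chains with greatest element `x`. -/
noncomputable def rk {α : Type*} [Preorder α] (x : α) : ℕ :=
  (Set.chainHeight (Set.Iio x) (· < ·)).toNat

/-- The rank of a (finite) poset: the maximal rank of an element. -/
noncomputable def prk (α : Type*) [Preorder α] [Fintype α] : ℕ :=
  Finset.univ.sup (rk (α := α))

/-- A finite poset is ranked iff covering relations increase `rk` by one;
equivalently, for every `x` all maximal chains with greatest element `x`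
have the same length. -/
def IsRanked (α : Type*) [Preorder α] : Prop :=
  ∀ x y : α, x ⋖ y → rk y = rk x + 1

/-- The set of atoms (elements of rank 1) of a poset. -/
def atoms (α : Type*) [Preorder α] : Set α := {x : α | rk x = 1}

/-- `joinSet T` is the join `⋁ T`: the set of minimal upper bounds of `T`. -/
def joinSet {α : Type*} [PartialOrder α] (T : Set α) : Set α :=
  {z | z ∈ upperBounds T ∧ ∀ w ∈ upperBounds T, w ≤ z → w = z}

/-- `meetSet T` is the meet `⋀ T`: the set of maximal lower bounds of `T`. -/
def meetSet {α : Type*} [PartialOrder α] (T : Set α) : Set α :=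
  {z | z ∈ lowerBounds T ∧ ∀ w ∈ lowerBounds T, z ≤ w → w = z}

/-- A poset is a lattice if any two elements have a unique minimal upper
bound and a unique maximal lower bound. -/
def IsLatticePoset (α : Type*) [PartialOrder α] : Prop :=
  ∀ x y : α, (∃! z, z ∈ joinSet {x, y}) ∧ (∃! z, z ∈ meetSet {x, y})

/-- A (finite) lattice is geometric if for all `x, y`: `y` covers `x` iff
there is an atom `a` with `a ≰ x` and `y = x ∨ a`. -/
def IsGeomLattice (α : Type*) [PartialOrder α] : Prop :=
  IsLatticePoset α ∧
    ∀ x y : α, x ⋖ y ↔ ∃ a : α, a ∈ atoms α ∧ ¬a ≤ x ∧ y ∈ joinSet {x, a}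

/-- A finite ranked poset is locally geometric if every lower interval
`P_{≤ x}` is a geometric lattice. -/
def IsLocallyGeometric (α : Type*) [PartialOrder α] : Prop :=
  IsRanked α ∧ ∀ x : α, IsGeomLattice {y : α // y ≤ x}

/-- The Möbius function of a finite poset. -/
noncomputable def mob {α : Type*} [PartialOrder α] [Fintype α] (a b : α) : ℤ :=
  if a = b then 1
  else if a < b then
    - ∑ c ∈ (Finset.univ.filter (fun c : α => a ≤ c ∧ c < b)).attach, mob a c.1
  else 0
termination_by (Finset.univ.filter (fun c : α => c ≤ b)).card
decreasing_by
  have hc := c.2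
  simp only [Finset.mem_filter, Finset.mem_univ, true_and] at hc
  apply Finset.card_lt_card
  constructor
  · intro z hz
    simp only [Finset.mem_filter, Finset.mem_univ, true_and] at hz ⊢
    exact hz.trans hc.2.le
  · intro hsub
    have hb : b ∈ Finset.univ.filter (fun z : α => z ≤ b) := by
      simp
    have := hsub hb
    simp only [Finset.mem_filter, Finset.mem_univ, true_and] at this
    exact absurd (lt_of_le_of_lt this hc.2) (lt_irrefl _)

/-- The characteristic polynomial of a finite ranked poset with `0̂`:
`χ_P(t) = ∑_x μ(0̂,x) t^(rk(P) - rk(x))`. -/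
noncomputable def charPoly (α : Type*) [PartialOrder α] [Fintype α] [OrderBot α] :
    Polynomial ℤ :=
  ∑ x : α, Polynomial.C (mob ⊥ x) * Polynomial.X ^ (prk α - rk x)

/-- The subposet of `P` generated by a set `B` of atoms: the minimal element
together with all joins of subsets of `B`. -/
def genSub {α : Type*} [PartialOrder α] [OrderBot α] (B : Set α) : Set α :=
  insert ⊥ {z | ∃ T ⊆ B, z ∈ joinSet T}

instance upperOrderBot {α : Type*} [PartialOrder α] (a : α) :
    OrderBot {y : α // a ≤ y} where
  bot := ⟨a, le_rfl⟩
  bot_le y := y.2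

instance genSubOrderBot {α : Type*} [PartialOrder α] [OrderBot α] (B : Set α) :
    OrderBot {y : α // y ∈ genSub B} where
  bot := ⟨⊥, Set.mem_insert _ _⟩
  bot_le y := bot_le

/-- `OrderBot` structure on a down-set containing `⊥`. -/
def subsetOrderBot {α : Type*} [PartialOrder α] [OrderBot α] {Q : Set α}
    (h : ⊥ ∈ Q) : OrderBot {y : α // y ∈ Q} where
  bot := ⟨⊥, h⟩
  bot_le y := bot_le

/-- The class of inductive posets: the smallest class of locally geometric
posets containing the one-element poset and closed under the addition step:
`P ∈ IP` whenever there is an atom `a` such that `P'' = P_{≥a} ∈ IP`,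
`P' = P(A(P) \ {a}) ∈ IP` and `χ_{P''} ∣ χ_{P'}`. -/
inductive IsInductivePoset :
    ∀ (β : Type) (po : PartialOrder β) (fin : Fintype β) (bo : OrderBot β), Prop where
  | triv (β : Type) [po : PartialOrder β] [fin : Fintype β] [bo : OrderBot β]
      (h : ∀ x : β, x = ⊥) : IsInductivePoset β po fin bo
  | step (β : Type) [po : PartialOrder β] [fin : Fintype β] [bo : OrderBot β]
      (hLG : IsLocallyGeometric β) (a : β) (ha : a ∈ atoms β)
      (hres : IsInductivePoset {y : β // a ≤ y} inferInstance inferInstance inferInstance)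
      (hdel : IsInductivePoset {y : β // y ∈ genSub (atoms β \ {a})}
        inferInstance inferInstance inferInstance)
      (hdvd : charPoly {y : β // a ≤ y} ∣ charPoly {y : β // y ∈ genSub (atoms β \ {a})}) :
      IsInductivePoset β po fin bo

/-- The class of divisional posets: the smallest class of locally geometric
posets containing the one-element poset and closed under:
`P ∈ DP` whenever there is an atom `a` such that `P'' = P_{≥a} ∈ DP`
and `χ_{P''} ∣ χ_P`. -/
inductive IsDivisionalPoset :
    ∀ (β : Type) (po : PartialOrder β) (fin : Fintype β) (bo : OrderBot β), Prop where
  | triv (β : Type) [po : PartialOrder β] [fin : Fintype β] [bo : OrderBot β]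
      (h : ∀ x : β, x = ⊥) : IsDivisionalPoset β po fin bo
  | step (β : Type) [po : PartialOrder β] [fin : Fintype β] [bo : OrderBot β]
      (hLG : IsLocallyGeometric β) (a : β) (ha : a ∈ atoms β)
      (hres : IsDivisionalPoset {y : β // a ≤ y} inferInstance inferInstance inferInstance)
      (hdvd : charPoly {y : β // a ≤ y} ∣ charPoly β) :
      IsDivisionalPoset β po fin bo

/-- An element `m` of a (geometric) lattice is modular if
`m ∧ (y ∨ z) = (m ∧ y) ∨ z` for all `z ≤ m` and all `y`. Joins and meets are
expressed via `joinSet` and `meetSet`. -/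
def IsModular {β : Type*} [PartialOrder β] (m : β) : Prop :=
  ∀ z y j mj my r : β, z ≤ m →
    j ∈ joinSet {y, z} → mj ∈ meetSet {m, j} →
    my ∈ meetSet {m, y} → r ∈ joinSet {my, z} → mj = r

/-- `Q` is an M-ideal of the locally geometric poset `β`. -/
def IsMIdeal (β : Type*) [PartialOrder β] (Q : Set β) : Prop :=
  IsLowerSet Q ∧
  (∀ x y : β, Maximal (· ∈ Q) x → Maximal (· ∈ Q) y → rk x = rk y) ∧
  (∀ T ⊆ Q, joinSet T ⊆ Q) ∧
  (∀ y ∈ Q, ∀ a ∈ atoms β, a ∉ Q → (joinSet {a, y}).Nonempty) ∧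
  (∀ x : β, IsMax x → ∃ y, Maximal (· ∈ Q) y ∧
    ∃ h : y ≤ x, IsModular (⟨y, h⟩ : {u : β // u ≤ x}))

/-- `Q` is a TM-ideal of the locally geometric poset `β`: an M-ideal where
moreover `|a ∨ y| = 1` for `y ∈ Q` and atoms `a ∉ Q`. -/
def IsTMIdeal (β : Type*) [PartialOrder β] (Q : Set β) : Prop :=
  IsMIdeal β Q ∧ ∀ y ∈ Q, ∀ a ∈ atoms β, a ∉ Q → ∃! z, z ∈ joinSet {a, y}

/-- A locally geometric poset is supersolvable if it admits an M-chain
`{0̂} = Q_0 ⊊ Q_1 ⊊ ⋯ ⊊ Q_r = P` with each `Q_i` an M-ideal of `Q_{i+1}`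
and `rk(Q_i) = i`. -/
def IsSupersolvable (β : Type*) [PartialOrder β] [Fintype β] [OrderBot β] : Prop :=
  ∃ Q : Fin (prk β + 1) → Set β,
    Q 0 = {⊥} ∧ Q (Fin.last _) = Set.univ ∧
    (∀ i : Fin (prk β), Q i.castSucc ⊂ Q i.succ) ∧
    (∀ i : Fin (prk β + 1), prk {y : β // y ∈ Q i} = i) ∧
    ∀ i : Fin (prk β),
      IsMIdeal {y : β // y ∈ Q i.succ} {z : {y : β // y ∈ Q i.succ} | (z : β) ∈ Q i.castSucc}

/-- A locally geometric poset is strictly supersolvable if it admits a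
TM-chain as above, with each `Q_i` a TM-ideal of `Q_{i+1}`. -/
def IsStrictlySupersolvable (β : Type*) [PartialOrder β] [Fintype β] [OrderBot β] : Prop :=
  ∃ Q : Fin (prk β + 1) → Set β,
    Q 0 = {⊥} ∧ Q (Fin.last _) = Set.univ ∧
    (∀ i : Fin (prk β), Q i.castSucc ⊂ Q i.succ) ∧
    (∀ i : Fin (prk β + 1), prk {y : β // y ∈ Q i} = i) ∧
    ∀ i : Fin (prk β),
      IsTMIdeal {y : β // y ∈ Q i.succ} {z : {y : β // y ∈ Q i.succ} | (z : β) ∈ Q i.castSucc}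

end PosetArr

end
-- ===================== auxiliary development =====================
namespace PosetArr

open Polynomial

section Generic

variable {γ : Type*} [PartialOrder γ]

lemma pairwise_total_of_mem {R : γ → γ → Prop} :
    ∀ l : List γ, l.Pairwise R → ∀ x ∈ l, ∀ y ∈ l, x ≠ y → R x y ∨ R y x := by
  intro l
  induction l with
  | nil => simp
  | cons a l ih =>
    intro hp x hx y hy hxy
    rw [List.pairwise_cons] at hp
    rcases List.mem_cons.1 hx with hxa | hx' <;> rcases List.mem_cons.1 hy with hya | hy'
    · exact absurd (hxa.trans hya.symm) hxy
    · rw [hxa]; exact Or.inl (hp.1 y hy')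
    · rw [hya]; exact Or.inr (hp.1 x hx')
    · exact ih hp.2 x hx' y hy' hxy

def _root_.Set.subchain (s : Set γ) : Set (List γ) :=
  {l | l.Chain' (· < ·) ∧ ∀ i ∈ l, i ∈ s}

theorem _root_.Set.length_le_chainHeight_of_mem_subchain {s : Set γ} {l : List γ}
    (hl : l ∈ s.subchain) : (l.length : ℕ∞) ≤ s.chainHeight (· < ·) := by
  have hp : l.Pairwise (· < ·) := List.isChain_iff_pairwise.1 hl.1
  have hnd : l.Nodup := hp.imp ne_of_lt
  have h1 : ((l.toFinset : Set γ)).encard = l.length := by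
    rw [Set.encard_coe_eq_coe_finsetCard, List.toFinset_card_of_nodup hnd]
  rw [← h1]
  apply Set.encard_le_chainHeight_of_isChain
  · intro x hx; exact hl.2 x (List.mem_toFinset.1 hx)
  · intro x hx y hy hxy
    exact pairwise_total_of_mem l hp x (List.mem_toFinset.1 hx) y (List.mem_toFinset.1 hy) hxy

lemma exists_pairwise_of_isChain : ∀ (n : ℕ) (t : Set γ), t.encard = n →
    IsChain (· < ·) t → ∃ l : List γ, l.Pairwise (· < ·) ∧ (∀ i ∈ l, i ∈ t) ∧ l.length = n := by
  intro n
  induction n with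
  | zero => intro t _ _; exact ⟨[], by simp, by simp, rfl⟩
  | succ n ih =>
    intro t ht hc
    have hfin : t.Finite := Set.finite_of_encard_eq_coe ht
    have hne : t.Nonempty := by
      rw [← Set.encard_pos, ht]; exact_mod_cast Nat.succ_pos n
    obtain ⟨m, hm⟩ := hfin.exists_maximal hne
    have ht' : (t \ {m}).encard = n := by
      rw [Set.encard_diff_singleton_of_mem hm.1, ht, ← ENat.coe_one, ← ENat.coe_sub, Nat.add_sub_cancel]
    obtain ⟨l, hl1, hl2, hl3⟩ := ih (t \ {m}) ht' (hc.mono Set.diff_subset)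
    refine ⟨l ++ [m], ?_, ?_, by simp [hl3]⟩
    · rw [List.pairwise_append]
      refine ⟨hl1, by simp, ?_⟩
      intro x hx y hy
      rw [List.mem_singleton] at hy
      rw [hy]
      have hx' := hl2 x hx
      have hxm : x ≠ m := fun h => hx'.2 h
      rcases hc hx'.1 hm.1 hxm with h | h
      · exact h
      · exact absurd (hm.2 hx'.1 h.le) (not_le_of_gt h)
    · intro i hi
      rcases List.mem_append.1 hi with h | h
      · exact (hl2 i h).1
      · rw [List.mem_singleton] at h; rw [h]; exact hm.1

theorem _root_.Set.exists_chain_of_le_chainHeight (s : Set γ) {n : ℕ}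
    (hn : (n : ℕ∞) ≤ s.chainHeight (· < ·)) : ∃ l ∈ s.subchain, l.length = n := by
  obtain ⟨t, hts, hte, htc⟩ := Set.exists_isChain_of_le_chainHeight n hn
  obtain ⟨l, hl1, hl2, hl3⟩ := exists_pairwise_of_isChain n t hte htc
  exact ⟨l, ⟨List.isChain_iff_pairwise.2 hl1, fun i hi => hts (hl2 i hi)⟩, hl3⟩

theorem _root_.Set.le_chainHeight_iff {s : Set γ} {n : ℕ} :
    (n : ℕ∞) ≤ s.chainHeight (· < ·) ↔ ∃ l ∈ s.subchain, l.length = n :=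
  ⟨Set.exists_chain_of_le_chainHeight s, fun ⟨_, hl, he⟩ =>
    he ▸ Set.length_le_chainHeight_of_mem_subchain hl⟩

lemma chainHeight_image_val {p : γ → Prop} (s : Set (Subtype p)) :
    (Subtype.val '' s).chainHeight (· < ·) = s.chainHeight (· < ·) :=
  Set.chainHeight_eq_of_relEmbedding s (Subtype.relEmbedding (· < ·) p)

lemma chainHeight_ne_top [Finite γ] (s : Set γ) : s.chainHeight (· < ·) ≠ ⊤ := by
  exact Set.chainHeight_ne_top_of_finite _ _ (Set.toFinite s)

lemma rk_def (x : γ) : rk x = ((Set.Iio x).chainHeight (· < ·)).toNat := rfl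

lemma rk_cast [Finite γ] (x : γ) : (rk x : ℕ∞) = (Set.Iio x).chainHeight (· < ·) := by
  rw [rk_def, ENat.coe_toNat (chainHeight_ne_top _)]

lemma rk_bot [OrderBot γ] : rk (⊥ : γ) = 0 := by
  rw [rk_def]
  have : Set.Iio (⊥ : γ) = ∅ := by
    ext w; simp [Set.mem_Iio]
  rw [this, Set.chainHeight_empty]; rfl

lemma rk_eq_zero_iff [Finite γ] [OrderBot γ] {x : γ} : rk x = 0 ↔ x = ⊥ := by
  constructor
  · intro h
    have h2 : (Set.Iio x).chainHeight (· < ·) = 0 := by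
      have := rk_cast x
      rw [h] at this; exact_mod_cast this.symm
    rw [Set.chainHeight_eq_zero_iff] at h2
    by_contra hx
    have : (⊥ : γ) ∈ Set.Iio x := lt_of_le_of_ne bot_le (Ne.symm hx)
    rw [h2] at this; exact this
  · rintro rfl; exact rk_bot

lemma mem_atoms_iff_Iio [Finite γ] [OrderBot γ] {x : γ} :
    x ∈ atoms γ ↔ Set.Iio x = {⊥} := by
  constructor
  · intro h
    have h1 : (Set.Iio x).chainHeight (· < ·) = 1 := by
      have := rk_cast x
      rw [show rk x = 1 from h] at this
      exact_mod_cast this.symm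
    have hxb : x ≠ ⊥ := by
      intro hx; subst hx
      rw [show Set.Iio (⊥:γ) = ∅ by ext w; simp, Set.chainHeight_empty] at h1
      simp at h1
    ext w
    simp only [Set.mem_Iio, Set.mem_singleton_iff]
    constructor
    · intro hw
      by_contra hwb
      have : ((2:ℕ) : ℕ∞) ≤ (Set.Iio x).chainHeight (· < ·) := by
        apply Set.le_chainHeight_iff.2
        refine ⟨[⊥, w], ⟨?_, ?_⟩, rfl⟩
        · simp [List.Chain', List.isChain_cons_cons, lt_of_le_of_ne bot_le (Ne.symm hwb)]
        · intro b hb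
          simp only [List.mem_cons, List.mem_singleton] at hb
          rcases hb with rfl | rfl | h
          · exact lt_of_le_of_lt bot_le hw
          · exact hw
          · exact absurd h List.not_mem_nil
      rw [h1] at this
      norm_num at this
    · rintro rfl; exact lt_of_le_of_ne bot_le (Ne.symm hxb)
  · intro h
    show rk x = 1
    rw [rk_def, h]
    rw [← Set.encard_eq_chainHeight_of_isChain _ (by
      intro u hu v hv huv; simp at hu hv; subst hu; subst hv; exact absurd rfl huv),
      Set.encard_singleton]
    rfl

lemma atom_ne_bot [Finite γ] [OrderBot γ] {x : γ} (h : x ∈ atoms γ) : x ≠ ⊥ := by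
  intro hx
  have : rk x = 1 := h
  rw [hx, rk_bot] at this
  simp at this

lemma exists_atom_le [Finite γ] [OrderBot γ] {x : γ} (hx : x ≠ ⊥) :
    ∃ b ∈ atoms γ, b ≤ x := by
  have hwf : WellFounded ((· < ·) : γ → γ → Prop) := wellFounded_lt
  have hne : ({w : γ | ⊥ < w ∧ w ≤ x}).Nonempty :=
    ⟨x, lt_of_le_of_ne bot_le (Ne.symm hx), le_rfl⟩
  obtain ⟨z, hz, hmin⟩ := hwf.has_min _ hne
  refine ⟨z, ?_, hz.2⟩
  rw [mem_atoms_iff_Iio]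
  ext w
  simp only [Set.mem_Iio, Set.mem_singleton_iff]
  constructor
  · intro hw
    by_contra hwb
    exact hmin w ⟨lt_of_le_of_ne bot_le (Ne.symm hwb), hw.le.trans hz.2⟩ hw
  · rintro rfl; exact hz.1

end Generic

end PosetArr
namespace PosetArr

open Polynomial

section JoinSet

variable {γ : Type*} [PartialOrder γ]

lemma joinSet_congr {S T : Set γ} (h : upperBounds S = upperBounds T) :
    joinSet S = joinSet T := by
  unfold joinSet; rw [h]

lemma le_of_mem_of_joinSet {S : Set γ} {b z : γ} (hb : b ∈ S) (hz : z ∈ joinSet S) :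
    b ≤ z := hz.1 hb

lemma exists_joinSet_le [Finite γ] {S : Set γ} {w : γ} (hw : w ∈ upperBounds S) :
    ∃ z ∈ joinSet S, z ≤ w := by
  have hwf : WellFounded ((· < ·) : γ → γ → Prop) := wellFounded_lt
  have hne : ({v : γ | v ∈ upperBounds S ∧ v ≤ w}).Nonempty := ⟨w, hw, le_rfl⟩
  obtain ⟨z, hz, hmin⟩ := hwf.has_min _ hne
  refine ⟨z, ⟨hz.1, ?_⟩, hz.2⟩
  intro v hv hvz
  by_contra hne'
  exact hmin v ⟨hv, hvz.trans hz.2⟩ (lt_of_le_of_ne hvz hne')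

lemma mem_joinSet_singleton (z : γ) : z ∈ joinSet ({z} : Set γ) := by
  constructor
  · intro w hw; simp only [Set.mem_singleton_iff] at hw; subst hw; exact le_rfl
  · intro w hw hwz
    exact le_antisymm hwz (hw rfl)

lemma joinSet_empty_eq [OrderBot γ] : joinSet (∅ : Set γ) = {⊥} := by
  ext z
  simp only [joinSet, upperBounds_empty, Set.mem_setOf_eq, Set.mem_univ, true_and,
    Set.mem_singleton_iff]
  constructor
  · intro h; exact (h ⊥ trivial bot_le).symm

  · rintro rfl; exact fun w _ hw => le_antisymm hw bot_le

/-- the unique join is a least upper bound -/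
lemma joinSet_le_of_unique [Finite γ] {S : Set γ} {z : γ}
    (hu : ∃! u, u ∈ joinSet S) (hz : z ∈ joinSet S) {w : γ} (hw : w ∈ upperBounds S) :
    z ≤ w := by
  obtain ⟨z', hz', hle⟩ := exists_joinSet_le hw
  obtain ⟨u, _, huniq⟩ := hu
  rw [huniq z hz, huniq z' hz'] at *
  exact hle

/-- finite joins from pairwise unique joins -/
lemma existsUnique_joinSet [Finite γ]
    (hbot : ∃ b : γ, ∀ y, b ≤ y)
    (hpair : ∀ u v : γ, ∃! z, z ∈ joinSet ({u, v} : Set γ)) :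
    ∀ B : Finset γ, ∃! z, z ∈ joinSet (↑B : Set γ) := by
  classical
  intro B
  induction B using Finset.induction_on with
  | empty =>
    obtain ⟨b, hb⟩ := hbot
    refine ⟨b, ⟨fun w hw => absurd hw (by simp), fun w _ hwb => le_antisymm hwb (hb w)⟩, ?_⟩
    intro z hz
    exact (hz.2 b (fun w hw => absurd hw (by simp)) (hb z)).symm
  | @insert c B hc IH =>
    obtain ⟨j, hj, hjuniq⟩ := id IH
    have hub : upperBounds (↑(insert c B) : Set γ) = upperBounds ({c, j} : Set γ) := by
      ext w
      simp only [Finset.coe_insert, upperBounds_insert, Set.mem_inter_iff, upperBounds_singleton,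
        Set.mem_Ici]
      constructor
      · rintro ⟨hcw, hBw⟩
        exact ⟨hcw, joinSet_le_of_unique IH hj hBw⟩
      · rintro ⟨hcw, hjw⟩
        refine ⟨hcw, fun s hs => (hj.1 hs).trans hjw⟩
    rw [show (↑(insert c B) : Set γ) = insert c (↑B : Set γ) from Finset.coe_insert c B] at hub ⊢
    rw [show joinSet (insert c (↑B : Set γ)) = joinSet ({c, j} : Set γ) from joinSet_congr hub]
    exact hpair c j

end JoinSet

section Subtype

variable {γ : Type*} [PartialOrder γ] {p : γ → Prop}

lemma sub_upperBounds_iff {S : Set γ} (hS : ∀ s ∈ S, p s) (w : Subtype p) :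
    w ∈ upperBounds {η : Subtype p | ↑η ∈ S} ↔ (w : γ) ∈ upperBounds S := by
  constructor
  · intro h s hs
    exact h (a := ⟨s, hS s hs⟩) hs
  · intro h η hη
    exact h hη

/-- joins in the ambient poset restrict to the subtype -/
lemma mem_sub_joinSet_of_joinSet {S : Set γ} (hS : ∀ s ∈ S, p s) {z : γ} (hz : z ∈ joinSet S)
    (hzp : p z) : (⟨z, hzp⟩ : Subtype p) ∈ joinSet {η : Subtype p | ↑η ∈ S} := by
  constructor
  · rw [sub_upperBounds_iff hS]; exact hz.1
  · intro w hw hwz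
    rw [sub_upperBounds_iff hS] at hw
    exact Subtype.ext (hz.2 _ hw hwz)

/-- for a downward-closed predicate, subtype joins and ambient joins agree -/
lemma sub_joinSet_iff_of_downClosed (hp : ∀ w z : γ, w ≤ z → p z → p w)
    {S : Set γ} (hS : ∀ s ∈ S, p s) (ζ : Subtype p) :
    ζ ∈ joinSet {η : Subtype p | ↑η ∈ S} ↔ (ζ : γ) ∈ joinSet S := by
  constructor
  · intro h
    constructor
    · exact (sub_upperBounds_iff hS ζ).1 h.1
    · intro w hw hwz
      have hpw : p w := hp w ζ hwz ζ.2
      have := h.2 ⟨w, hpw⟩ ((sub_upperBounds_iff hS _).2 hw) hwz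
      exact congrArg Subtype.val this
  · intro h
    simpa using mem_sub_joinSet_of_joinSet hS h ζ.2

/-- for a join-closed subset, subtype joins and ambient joins agree -/
lemma sub_joinSet_iff_of_joinClosed [Finite γ] {S : Set γ}
    (hS : ∀ s ∈ S, p s) (hq : ∀ z ∈ joinSet S, p z) (ζ : Subtype p) :
    ζ ∈ joinSet {η : Subtype p | ↑η ∈ S} ↔ (ζ : γ) ∈ joinSet S := by
  constructor
  · intro h
    refine ⟨(sub_upperBounds_iff hS ζ).1 h.1, ?_⟩
    intro w hw hwz
    obtain ⟨z, hz, hzw⟩ := exists_joinSet_le hw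
    have hzz : (⟨z, hq z hz⟩ : Subtype p) = ζ :=
      h.2 ⟨z, hq z hz⟩ ((sub_upperBounds_iff hS _).2 hz.1)
        (show (z : γ) ≤ (ζ : γ) from le_trans hzw hwz)
    have hz' : z = (ζ : γ) := congrArg Subtype.val hzz
    exact le_antisymm hwz (hz' ▸ hzw)
  · intro h
    simpa using mem_sub_joinSet_of_joinSet hS h ζ.2

end Subtype

end PosetArr
namespace PosetArr

open Polynomial

section Mob

variable {γ : Type*} [PartialOrder γ] [Fintype γ] [OrderBot γ]

lemma mob_self (x : γ) : mob x x = 1 := by rw [mob]; simp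

lemma mob_of_lt {x : γ} (hx : (⊥ : γ) < x) :
    mob (⊥ : γ) x = - ∑ c ∈ Finset.univ.filter (fun c : γ => c < x), mob (⊥ : γ) c := by
  rw [mob]
  rw [if_neg (ne_of_lt hx), if_pos hx]
  congr 1
  rw [Finset.sum_attach (Finset.univ.filter (fun c : γ => ⊥ ≤ c ∧ c < x)) (mob ⊥)]
  apply Finset.sum_congr _ (fun _ _ => rfl)
  ext c
  simp [bot_le]

lemma filter_le_eq_insert (x : γ) :
    Finset.univ.filter (fun y : γ => y ≤ x) =
      insert x (Finset.univ.filter (fun y : γ => y < x)) := by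
  ext y
  simp only [Finset.mem_filter, Finset.mem_univ, true_and, Finset.mem_insert]
  rw [le_iff_lt_or_eq]; tauto

lemma sum_mob_Iic (x : γ) :
    ∑ y ∈ Finset.univ.filter (fun y : γ => y ≤ x), mob (⊥ : γ) y
      = if x = ⊥ then 1 else 0 := by
  rw [filter_le_eq_insert, Finset.sum_insert (by simp)]
  by_cases hx : x = ⊥
  · subst hx
    rw [if_pos rfl, mob_self]
    have : Finset.univ.filter (fun y : γ => y < ⊥) = ∅ := by
      ext y; simp [not_lt_bot]
    rw [this]; simp
  · rw [if_neg hx, mob_of_lt (lt_of_le_of_ne bot_le (Ne.symm hx))]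
    ring

lemma eq_mob_of_sum (F : γ → ℤ)
    (hF : ∀ x : γ, ∑ y ∈ Finset.univ.filter (fun y : γ => y ≤ x), F y
      = if x = ⊥ then 1 else 0) :
    ∀ x : γ, F x = mob (⊥ : γ) x := by
  intro x
  induction x using WellFoundedLT.induction with
  | _ x IH =>
    have h1 := hF x
    have h2 := sum_mob_Iic x
    rw [filter_le_eq_insert, Finset.sum_insert (by simp)] at h1 h2
    have h3 : ∑ y ∈ Finset.univ.filter (fun y : γ => y < x), F y
        = ∑ y ∈ Finset.univ.filter (fun y : γ => y < x), mob (⊥ : γ) y := by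
      apply Finset.sum_congr rfl
      intro y hy
      simp only [Finset.mem_filter, Finset.mem_univ, true_and] at hy
      exact IH y hy
    omega

end Mob

section Crosscut

variable {γ : Type*} [PartialOrder γ] [Fintype γ] [OrderBot γ]

/-- the finset of atoms -/
noncomputable def atomsF (γ : Type*) [Preorder γ] [Fintype γ] : Finset γ :=
  Finset.univ.filter (fun y : γ => y ∈ atoms γ)

open scoped Classical in
theorem crosscut
    (HJ : ∀ B : Finset γ, (↑B : Set γ) ⊆ atoms γ → ∀ x : γ, (↑B : Set γ) ⊆ Set.Iic x →
      ∃! y : γ, y ≤ x ∧ y ∈ joinSet (↑B : Set γ)) (x : γ) :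
    mob (⊥ : γ) x = ∑ B ∈ (atomsF γ).powerset,
      (-1 : ℤ) ^ B.card * (if x ∈ joinSet (↑B : Set γ) then 1 else 0) := by
  have key : ∀ x : γ, ∑ y ∈ Finset.univ.filter (fun y : γ => y ≤ x),
      (∑ B ∈ (atomsF γ).powerset,
        (-1 : ℤ) ^ B.card * (if y ∈ joinSet (↑B : Set γ) then 1 else 0))
      = if x = ⊥ then 1 else 0 := by
    intro x
    rw [Finset.sum_comm]
    have inner : ∀ B ∈ (atomsF γ).powerset,
        ∑ y ∈ Finset.univ.filter (fun y : γ => y ≤ x),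
          (-1 : ℤ) ^ B.card * (if y ∈ joinSet (↑B : Set γ) then 1 else 0)
        = (-1 : ℤ) ^ B.card * (if (↑B : Set γ) ⊆ Set.Iic x then 1 else 0) := by
      intro B hB
      rw [← Finset.mul_sum]
      congr 1
      have hBatoms : (↑B : Set γ) ⊆ atoms γ := by
        intro b hb
        have := Finset.mem_powerset.1 hB hb
        simpa [atomsF] using this
      by_cases hBx : (↑B : Set γ) ⊆ Set.Iic x
      · rw [if_pos hBx]
        obtain ⟨y₀, hy₀, huniq⟩ := HJ B hBatoms x hBx
        have hfe : (Finset.univ.filter (fun y : γ => y ≤ x)).filter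
            (fun y => y ∈ joinSet (↑B : Set γ)) = {y₀} := by
          ext z
          simp only [Finset.mem_filter, Finset.mem_univ, true_and, Finset.mem_singleton]
          constructor
          · rintro ⟨h1, h2⟩; exact huniq z ⟨h1, h2⟩
          · rintro rfl; exact ⟨hy₀.1, hy₀.2⟩
        rw [← Finset.sum_filter, hfe, Finset.sum_singleton]
      · rw [if_neg hBx]
        apply Finset.sum_eq_zero
        intro y hy
        simp only [Finset.mem_filter, Finset.mem_univ, true_and] at hy
        rw [if_neg]
        intro hjy
        obtain ⟨b, hbB, hbx⟩ := Set.not_subset.1 hBx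
        exact hbx (le_trans (hjy.1 hbB) hy)
    rw [Finset.sum_congr rfl inner]
    have hsplit : ∀ B ∈ (atomsF γ).powerset,
        (-1 : ℤ) ^ B.card * (if (↑B : Set γ) ⊆ Set.Iic x then 1 else 0)
        = if (↑B : Set γ) ⊆ Set.Iic x then (-1 : ℤ) ^ B.card else 0 := by
      intro B _; split_ifs <;> ring
    rw [Finset.sum_congr rfl hsplit, ← Finset.sum_filter]
    have hps : (atomsF γ).powerset.filter (fun B : Finset γ => (↑B : Set γ) ⊆ Set.Iic x)
        = ((atomsF γ).filter (fun b => b ≤ x)).powerset := by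
      ext B
      simp only [Finset.mem_filter, Finset.mem_powerset]
      constructor
      · rintro ⟨h1, h2⟩
        intro b hb
        exact Finset.mem_filter.2 ⟨h1 hb, h2 hb⟩
      · intro h
        constructor
        · intro b hb; exact (Finset.mem_filter.1 (h hb)).1
        · intro b hb; exact (Finset.mem_filter.1 (h hb)).2
    rw [hps, Finset.sum_powerset_neg_one_pow_card]
    have hiff : ((atomsF γ).filter (fun b => b ≤ x) = ∅) ↔ x = ⊥ := by
      constructor
      · intro h
        by_contra hx
        obtain ⟨b, hb, hbx⟩ := exists_atom_le hx
        have : b ∈ (atomsF γ).filter (fun b => b ≤ x) := by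
          simp [atomsF, hb, hbx]
        rw [h] at this; exact absurd this (Finset.notMem_empty b)
      · rintro rfl
        ext b
        simp only [Finset.mem_filter, Finset.notMem_empty, iff_false, not_and, atomsF,
          Finset.mem_univ, true_and]
        intro hb hbb
        exact atom_ne_bot hb (le_bot_iff.1 hbb)
    rw [if_congr hiff rfl rfl]
  have := eq_mob_of_sum _ key x
  exact this.symm

end Crosscut

end PosetArr
namespace PosetArr

section Chains

variable {γ : Type*} [PartialOrder γ]

lemma lt_getLast_of_mem_dropLast {L : List γ} (h : List.Chain' (· < ·) L) (hne : L ≠ [])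
    {z : γ} (hz : z ∈ L.dropLast) : z < L.getLast hne := by
  have hp : List.Pairwise (· < ·) L := List.isChain_iff_pairwise.1 h
  have := List.dropLast_append_getLast hne
  rw [← this] at hp
  rw [List.pairwise_append] at hp
  exact hp.2.2 z hz _ (List.mem_singleton_self _)

lemma rk_getLast_of_coverChain (hr : IsRanked γ) :
    ∀ (l : List γ) (c : γ), List.Chain' (· ⋖ ·) (c :: l) →
      rk ((c :: l).getLast (List.cons_ne_nil c l)) = rk c + l.length := by
  intro l
  induction l with
  | nil => intro c _; simp
  | cons d l IH =>
    intro c hc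
    rw [List.Chain', List.isChain_cons_cons] at hc
    have h1 := hr c d hc.1
    rw [List.getLast_cons (List.cons_ne_nil d l), IH d hc.2, h1]
    simp only [List.length_cons]
    omega

lemma coverChain_chain'_lt {L : List γ} (h : List.Chain' (· ⋖ ·) L) :
    List.Chain' (· < ·) L := h.imp (fun _ _ hab => hab.1)

lemma le_toNat_of_cast_le {n : ℕ} {c : ℕ∞} (h : (n : ℕ∞) ≤ c) (hc : c ≠ ⊤) :
    n ≤ c.toNat := by
  lift c to ℕ using hc
  simpa using h

variable [Finite γ]

lemma rk_strictMono {z x : γ} (h : z < x) : rk z < rk x := by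
  obtain ⟨l, hl, hlen⟩ := Set.exists_chain_of_le_chainHeight (Set.Iio z) (rk_cast z).le
  have hsub : l ++ [z] ∈ (Set.Iio x).subchain := by
    constructor
    · rw [List.Chain', List.isChain_append]
      refine ⟨hl.1, List.isChain_singleton z, ?_⟩
      intro y hy w hw
      simp only [List.head?_cons, Option.mem_def, Option.some.injEq] at hw
      subst hw
      exact hl.2 y (List.mem_of_mem_getLast? hy)
    · intro w hw
      rcases List.mem_append.1 hw with h1 | h2
      · exact lt_trans (hl.2 w h1) h
      · simp only [List.mem_singleton] at h2; subst h2; exact h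
  have := Set.length_le_chainHeight_of_mem_subchain hsub
  rw [List.length_append, List.length_singleton, hlen] at this
  have h2 := le_toNat_of_cast_le this (chainHeight_ne_top _)
  have hx : rk x = ((Set.Iio x).chainHeight (· < ·)).toNat := rk_def x
  omega

lemma rk_le_of_le {z x : γ} (h : z ≤ x) : rk z ≤ rk x := by
  rcases eq_or_lt_of_le h with rfl | h'
  · exact le_rfl
  · exact (rk_strictMono h').le

/-- Every interval `[y, x]` contains a saturated chain of covers. -/
lemma exists_cover_chain (hr : IsRanked γ) {y x : γ} (hyx : y ≤ x) :
    ∃ l : List γ, List.Chain' (· ⋖ ·) (y :: l) ∧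
      ((y :: l).getLast (List.cons_ne_nil y l)) = x ∧ l.length = rk x - rk y ∧
      ∀ z ∈ l, y < z ∧ z ≤ x := by
  have hwf : WellFounded ((· < ·) : γ → γ → Prop) := wellFounded_lt
  obtain ⟨n, hn⟩ : ∃ n, rk x - rk y = n := ⟨_, rfl⟩
  induction n generalizing y with
  | zero =>
    have hxy : y = x := by
      rcases eq_or_lt_of_le hyx with h | h
      · exact h
      · exact absurd hn (by have := rk_strictMono h; omega)
    refine ⟨[], by simp [List.Chain'], by simp [hxy], by simp [hn], by simp⟩
  | succ n IH =>
    have hne : y ≠ x := by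
      intro h; subst h; omega
    have hS : ({w : γ | y < w ∧ w ≤ x}).Nonempty := ⟨x, lt_of_le_of_ne hyx hne, le_rfl⟩
    obtain ⟨z, hz, hmin⟩ := hwf.has_min _ hS
    have hcov : y ⋖ z := by
      refine ⟨hz.1, ?_⟩
      intro w hyw hwz
      exact hmin w ⟨hyw, hwz.le.trans hz.2⟩ hwz
    have hrz := hr y z hcov
    obtain ⟨l, hl1, hl2, hl3, hl4⟩ := IH hz.2 (by omega)
    refine ⟨z :: l, ?_, ?_, ?_, ?_⟩
    · rw [List.Chain', List.isChain_cons_cons]; exact ⟨hcov, hl1⟩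
    · rw [List.getLast_cons (List.cons_ne_nil z l)]; exact hl2
    · simp only [List.length_cons]; omega
    · intro w hw
      rcases List.mem_cons.1 hw with rfl | hw'
      · exact ⟨hz.1, hz.2⟩
      · exact ⟨lt_trans hz.1 (hl4 w hw').1, (hl4 w hw').2⟩

end Chains

section SubtypeRk

variable {γ : Type*} [PartialOrder γ] {p : γ → Prop}

lemma val_image_Iio (ξ : Subtype p) :
    Subtype.val '' (Set.Iio ξ) = {w : γ | p w ∧ w < ↑ξ} := by
  ext w
  simp only [Set.mem_image, Set.mem_Iio, Set.mem_setOf_eq]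
  constructor
  · rintro ⟨η, hη, rfl⟩
    exact ⟨η.2, hη⟩
  · rintro ⟨hw, hwx⟩
    exact ⟨⟨w, hw⟩, hwx, rfl⟩

lemma rk_subtype (ξ : Subtype p) :
    rk ξ = (({w : γ | p w ∧ w < ↑ξ}).chainHeight (· < ·)).toNat := by
  rw [rk_def, ← val_image_Iio ξ,
    chainHeight_image_val]

lemma rk_subtype_downClosed (hp : ∀ w z : γ, w ≤ z → p z → p w) (ξ : Subtype p) :
    rk ξ = rk (ξ : γ) := by
  rw [rk_subtype, rk_def]
  congr 1
  congr 1
  ext w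
  simp only [Set.mem_setOf_eq, Set.mem_Iio]
  exact ⟨fun h => h.2, fun h => ⟨hp w ξ h.le ξ.2, h⟩⟩

lemma mem_atoms_subtype_downClosed (hp : ∀ w z : γ, w ≤ z → p z → p w) (ξ : Subtype p) :
    ξ ∈ atoms (Subtype p) ↔ (ξ : γ) ∈ atoms γ := by
  unfold atoms
  rw [Set.mem_setOf_eq, Set.mem_setOf_eq, rk_subtype_downClosed hp]

lemma covBy_subtype_downClosed (hp : ∀ w z : γ, w ≤ z → p z → p w) (η ζ : Subtype p) :
    η ⋖ ζ ↔ (η : γ) ⋖ (ζ : γ) := by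
  constructor
  · rintro ⟨h1, h2⟩
    refine ⟨h1, ?_⟩
    intro w hw1 hw2
    exact h2 (c := ⟨w, hp w ζ hw2.le ζ.2⟩) hw1 hw2
  · rintro ⟨h1, h2⟩
    refine ⟨h1, ?_⟩
    intro w hw1 hw2
    exact h2 (c := (w : γ)) hw1 hw2

end SubtypeRk

end PosetArr
namespace PosetArr

section Geometric

variable {α : Type} [PartialOrder α] [Fintype α] [OrderBot α]

lemma HJ_of_hLG (hLG : IsLocallyGeometric α) (B : Finset α) (x : α)
    (hBx : (↑B : Set α) ⊆ Set.Iic x) :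
    ∃! y : α, y ≤ x ∧ y ∈ joinSet (↑B : Set α) := by
  set p : α → Prop := fun y => y ≤ x with hp
  have hpd : ∀ w z : α, w ≤ z → p z → p w := fun w z hwz hz => le_trans hwz hz
  have hlat := (hLG.2 x).1
  have hbot : ∃ b : Subtype p, ∀ y : Subtype p, b ≤ y :=
    ⟨⟨⊥, bot_le⟩, fun y => show (⊥ : α) ≤ (y : α) from bot_le⟩
  have hpair : ∀ u v : Subtype p, ∃! z, z ∈ joinSet ({u, v} : Set (Subtype p)) :=
    fun u v => (hlat u v).1
  have hBp : ∀ s ∈ (↑B : Set α), p s := fun s hs => hBx hs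
  have hBcoe : {η : Subtype p | ↑η ∈ (↑B : Set α)} = (↑(B.subtype p) : Set (Subtype p)) := by
    ext η
    simp only [Set.mem_setOf_eq, Finset.mem_coe, Finset.mem_subtype]
  obtain ⟨ζ, hζ, hζu⟩ := existsUnique_joinSet hbot hpair (B.subtype p)
  rw [← hBcoe] at hζ hζu
  refine ⟨(ζ : α), ⟨ζ.2, (sub_joinSet_iff_of_downClosed hpd hBp ζ).1 hζ⟩, ?_⟩
  rintro y' ⟨hy'x, hy'j⟩
  have := hζu ⟨y', hy'x⟩ (mem_sub_joinSet_of_joinSet hBp hy'j hy'x)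
  exact congrArg Subtype.val this

lemma exists_other_atom_le (hLG : IsLocallyGeometric α) {a x : α}
    (ha : a ∈ atoms α) (hax : a < x) : ∃ b ∈ atoms α, b ≤ x ∧ b ≠ a := by
  have hwf : WellFounded ((· < ·) : α → α → Prop) := wellFounded_lt
  have hS : ({w : α | a < w ∧ w ≤ x}).Nonempty := ⟨x, hax, le_rfl⟩
  obtain ⟨z, hz, hmin⟩ := hwf.has_min _ hS
  have hcovα : a ⋖ z := by
    refine ⟨hz.1, ?_⟩
    intro w haw hwz
    exact hmin w ⟨haw, hwz.le.trans hz.2⟩ hwz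
  set p : α → Prop := fun y => y ≤ x with hp
  have hpd : ∀ w z : α, w ≤ z → p z → p w := fun w z hwz hzz => le_trans hwz hzz
  have hcov : (⟨a, hax.le⟩ : Subtype p) ⋖ ⟨z, hz.2⟩ :=
    (covBy_subtype_downClosed hpd _ _).2 hcovα
  obtain ⟨β, hβatom, hβle, _⟩ := ((hLG.2 x).2 _ _).1 hcov
  refine ⟨(β : α), (mem_atoms_subtype_downClosed hpd β).1 hβatom, β.2, ?_⟩
  intro h
  exact hβle (show (β : α) ≤ a from le_of_eq h)

lemma cover_step (hLG : IsLocallyGeometric α) {x z b : α} {S : Finset α}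
    (hzx : z ≤ x) (hbx : b ≤ x) (hb : b ∈ atoms α) (hbz : ¬ b ≤ z)
    (hz : z ∈ joinSet (↑S : Set α)) (hSx : (↑S : Set α) ⊆ Set.Iic x) :
    ∃ y : α, y ≤ x ∧ y ∈ joinSet (↑(insert b S) : Set α) ∧ z ⋖ y := by
  set p : α → Prop := fun y => y ≤ x with hp
  have hpd : ∀ w u : α, w ≤ u → p u → p w := fun w u hwu hu => le_trans hwu hu
  have hins : (↑(insert b S) : Set α) ⊆ Set.Iic x := by
    rw [Finset.coe_insert]
    exact Set.insert_subset hbx hSx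
  obtain ⟨y, ⟨hyx, hyj⟩, _⟩ := HJ_of_hLG hLG (insert b S) x hins
  have hSp : ∀ s ∈ (↑S : Set α), p s := fun s hs => hSx hs
  have hinsp : ∀ s ∈ (↑(insert b S) : Set α), p s := fun s hs => hins hs
  set ζ : Subtype p := ⟨z, hzx⟩
  set βs : Subtype p := ⟨b, hbx⟩
  set υ : Subtype p := ⟨y, hyx⟩
  -- ζ is the unique join of S in the subtype
  have hζj : ζ ∈ joinSet {η : Subtype p | ↑η ∈ (↑S : Set α)} :=
    (sub_joinSet_iff_of_downClosed hpd hSp ζ).2 hz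
  have hbot : ∃ v : Subtype p, ∀ y : Subtype p, v ≤ y :=
    ⟨⟨⊥, bot_le⟩, fun y => show (⊥ : α) ≤ (y : α) from bot_le⟩
  have hpair : ∀ u v : Subtype p, ∃! w, w ∈ joinSet ({u, v} : Set (Subtype p)) :=
    fun u v => ((hLG.2 x).1 u v).1
  have hScoe : {η : Subtype p | ↑η ∈ (↑S : Set α)} = (↑(S.subtype p) : Set (Subtype p)) := by
    ext η
    simp only [Set.mem_setOf_eq, Finset.mem_coe, Finset.mem_subtype]
  have huniqS : ∃! w : Subtype p, w ∈ joinSet {η : Subtype p | ↑η ∈ (↑S : Set α)} := by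
    rw [hScoe]
    exact existsUnique_joinSet hbot hpair (S.subtype p)
  -- the upper bounds agree
  have hUB : upperBounds {η : Subtype p | ↑η ∈ (↑(insert b S) : Set α)}
      = upperBounds ({ζ, βs} : Set (Subtype p)) := by
    ext w
    constructor
    · intro hw
      rintro u hu
      rcases hu with rfl | hu
      · exact joinSet_le_of_unique huniqS hζj
          (fun η hη => hw (show (η : α) ∈ (↑(insert b S) : Set α) by
            rw [Finset.coe_insert]; exact Set.mem_insert_of_mem b hη))
      · rcases hu with rfl
        exact hw (show (βs : α) ∈ (↑(insert b S) : Set α) by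
          rw [Finset.coe_insert]; exact Set.mem_insert b _)
    · intro hw η hη
      rw [Finset.coe_insert] at hη
      rcases hη with hη | hη
      · have : βs ≤ w := hw (Set.mem_insert_of_mem ζ rfl)
        calc η ≤ βs := show (η:α) ≤ b from le_of_eq hη
        _ ≤ w := this
      · have hζw : ζ ≤ w := hw (Set.mem_insert ζ {βs})
        have : η ≤ ζ := show (η:α) ≤ z from hζj.1 hη
        exact this.trans hζw
  have hυj : υ ∈ joinSet {η : Subtype p | ↑η ∈ (↑(insert b S) : Set α)} :=
    (sub_joinSet_iff_of_downClosed hpd hinsp υ).2 hyj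
  rw [joinSet_congr hUB] at hυj
  have hβatom : βs ∈ atoms (Subtype p) := (mem_atoms_subtype_downClosed hpd βs).2 hb
  have hcov : ζ ⋖ υ := by
    apply ((hLG.2 x).2 ζ υ).2
    exact ⟨βs, hβatom, fun h => hbz h, hυj⟩
  exact ⟨y, hyx, hyj, (covBy_subtype_downClosed hpd ζ υ).1 hcov⟩

lemma exists_geom_chain (hLG : IsLocallyGeometric α) {x : α} {T : Finset α}
    (hT : (↑T : Set α) ⊆ atoms α) (hx : x ∈ joinSet (↑T : Set α)) :
    ∃ l : List α, List.Chain' (· ⋖ ·) ((⊥:α) :: l) ∧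
      (((⊥:α) :: l).getLast (List.cons_ne_nil _ l)) = x ∧
      ∀ z ∈ l, ∃ S : Finset α, S ⊆ T ∧ z ∈ joinSet (↑S : Set α) := by
  suffices aux : ∀ n : ℕ, ∀ (S : Finset α) (z : α), S ⊆ T → z ∈ joinSet (↑S : Set α) → z ≤ x →
      rk x - rk z = n →
      ∃ l : List α, List.Chain' (· ⋖ ·) (z :: l) ∧
        ((z :: l).getLast (List.cons_ne_nil z l)) = x ∧
        ∀ u ∈ l, ∃ S' : Finset α, S' ⊆ T ∧ u ∈ joinSet (↑S' : Set α) by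
    have h0 : (⊥:α) ∈ joinSet (↑(∅ : Finset α) : Set α) := by
      rw [Finset.coe_empty, joinSet_empty_eq]; rfl
    exact aux _ ∅ ⊥ (Finset.empty_subset T) h0 bot_le rfl
  intro n
  induction n using Nat.strong_induction_on with
  | _ n IH =>
    intro S z hST hz hzx hn
    by_cases hall : ∀ b ∈ T, b ≤ z
    · have hzUB : z ∈ upperBounds (↑T : Set α) := fun b hb => hall b hb
      have hzz : z = x := hx.2 z hzUB hzx
      subst hzz
      exact ⟨[], List.isChain_singleton z, rfl, by simp⟩
    · push_neg at hall
      obtain ⟨b, hbT, hbz⟩ := hall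
      have hbx : b ≤ x := hx.1 hbT
      have hSx : (↑S : Set α) ⊆ Set.Iic x := fun s hs => (hz.1 hs).trans hzx
      obtain ⟨y, hyx, hyjoin, hcov⟩ := cover_step hLG hzx hbx (hT hbT) hbz hz hSx
      have hrk := hLG.1 z y hcov
      have hzlt : z < x := lt_of_le_of_ne hzx (by rintro rfl; exact hbz hbx)
      have hlt := rk_strictMono hzlt
      have hrky : rk y ≤ rk x := rk_le_of_le hyx
      obtain ⟨l', hl1, hl2, hl3⟩ := IH (n-1) (by omega) (insert b S) y
        (Finset.insert_subset hbT hST) hyjoin hyx (by omega)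
      refine ⟨y :: l', ?_, ?_, ?_⟩
      · rw [List.Chain', List.isChain_cons_cons]; exact ⟨hcov, hl1⟩
      · rw [List.getLast_cons (List.cons_ne_nil y l')]; exact hl2
      · intro u hu
        rcases List.mem_cons.1 hu with rfl | hu'
        · exact ⟨insert b S, Finset.insert_subset hbT hST, hyjoin⟩
        · exact hl3 u hu'

lemma mem_genSub_of_mem {BS : Set α} {b : α} (hb : b ∈ BS) : b ∈ genSub BS :=
  Set.mem_insert_iff.2 (Or.inr ⟨{b}, Set.singleton_subset_iff.2 hb, mem_joinSet_singleton b⟩)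

lemma rk_genSub (hLG : IsLocallyGeometric α) {BS : Set α} (hBS : BS ⊆ atoms α)
    (ξ : {y : α // y ∈ genSub BS}) : rk ξ = rk (ξ : α) := by
  have hle : rk ξ ≤ rk (ξ : α) := by
    rw [rk_subtype, rk_def]
    apply ENat.toNat_le_toNat _ (chainHeight_ne_top _)
    apply Set.chainHeight_mono
    intro w hw; exact hw.2
  by_cases hbot : (ξ : α) = ⊥
  · have h0 : ξ = (⊥ : {y : α // y ∈ genSub BS}) := Subtype.ext hbot
    rw [h0, rk_bot, show ((⊥ : {y : α // y ∈ genSub BS}) : α) = ⊥ from rfl, rk_bot]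
  rcases Set.mem_insert_iff.1 ξ.2 with h | ⟨T, hTB, hjoin⟩
  · exact absurd h hbot
  have hTfin : T.Finite := Set.toFinite T
  set T' : Finset α := hTfin.toFinset with hT'
  have hT'c : (↑T' : Set α) = T := hTfin.coe_toFinset
  have hT'at : (↑T' : Set α) ⊆ atoms α := by rw [hT'c]; exact hTB.trans hBS
  rw [← hT'c] at hjoin
  obtain ⟨l, hl1, hl2, hl3⟩ := exists_geom_chain hLG hT'at hjoin
  have hlt := coverChain_chain'_lt hl1
  have hrkx : rk (ξ : α) = l.length := by
    have := rk_getLast_of_coverChain hLG.1 l ⊥ hl1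
    rw [hl2, rk_bot] at this
    omega
  set L₀ := ((⊥:α) :: l).dropLast with hL₀
  have hmemL₀ : ∀ z ∈ L₀, z ∈ {w : α | w ∈ genSub BS ∧ w < (ξ:α)} := by
    intro z hz
    have hzlt : z < (ξ:α) := by
      have := lt_getLast_of_mem_dropLast hlt (List.cons_ne_nil _ l) hz
      rwa [hl2] at this
    have hzmem : z ∈ genSub BS := by
      rcases List.mem_cons.1 (List.dropLast_subset _ hz) with rfl | hzl
      · exact Set.mem_insert _ _
      · obtain ⟨S, hST, hjS⟩ := hl3 z hzl
        refine Set.mem_insert_iff.2 (Or.inr ⟨↑S, ?_, hjS⟩)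
        intro s hs
        exact hTB (hT'c ▸ (Finset.coe_subset.2 hST) hs)
    exact ⟨hzmem, hzlt⟩
  have hchain : List.Chain' (· < ·) L₀ := by
    have h := List.dropLast_append_getLast (l := (⊥:α) :: l) (List.cons_ne_nil _ l)
    rw [← h] at hlt
    exact hlt.left_of_append
  have hsub : L₀ ∈ ({w : α | w ∈ genSub BS ∧ w < (ξ:α)}).subchain := ⟨hchain, hmemL₀⟩
  have hlen := Set.length_le_chainHeight_of_mem_subchain hsub
  have hlenL₀ : L₀.length = l.length := by
    rw [hL₀, List.length_dropLast, List.length_cons]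
    omega
  rw [hlenL₀] at hlen
  have hge := le_toNat_of_cast_le hlen (chainHeight_ne_top _)
  rw [rk_subtype ξ]
  rw [rk_subtype ξ] at hle
  omega

lemma mem_atoms_genSub (hLG : IsLocallyGeometric α) {BS : Set α} (hBS : BS ⊆ atoms α)
    (ξ : {y : α // y ∈ genSub BS}) :
    ξ ∈ atoms {y : α // y ∈ genSub BS} ↔ (ξ : α) ∈ BS := by
  have hrk := rk_genSub hLG hBS ξ
  have hiff : ξ ∈ atoms {y : α // y ∈ genSub BS} ↔ (ξ : α) ∈ atoms α := by
    show rk ξ = 1 ↔ rk (ξ:α) = 1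
    rw [hrk]
  rw [hiff]
  constructor
  · intro h
    have hbot : (ξ : α) ≠ ⊥ := atom_ne_bot h
    rcases Set.mem_insert_iff.1 ξ.2 with h' | ⟨T, hTB, hjoin⟩
    · exact absurd h' hbot
    have hTne : T.Nonempty := by
      rcases Set.eq_empty_or_nonempty T with rfl | h'
      · rw [joinSet_empty_eq] at hjoin
        exact absurd hjoin hbot
      · exact h'
    obtain ⟨c, hc⟩ := hTne
    have hcle : c ≤ (ξ:α) := hjoin.1 hc
    have hiio := mem_atoms_iff_Iio.1 h
    rcases eq_or_lt_of_le hcle with h' | h'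
    · rw [← h']; exact hTB hc
    · have : c = ⊥ := by
        have := hiio ▸ (Set.mem_Iio.2 h' : c ∈ Set.Iio (ξ:α))
        exact this
      exact absurd this (atom_ne_bot (hBS (hTB hc)))
  · intro h
    exact hBS h

lemma HJ_genSub (hLG : IsLocallyGeometric α) {BS : Set α} (hBS : BS ⊆ atoms α)
    (B : Finset {y : α // y ∈ genSub BS})
    (hBat : (↑B : Set {y : α // y ∈ genSub BS}) ⊆ atoms {y : α // y ∈ genSub BS})
    (ξ : {y : α // y ∈ genSub BS})
    (hBle : (↑B : Set {y : α // y ∈ genSub BS}) ⊆ Set.Iic ξ) :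
    ∃! η, η ≤ ξ ∧ η ∈ joinSet (↑B : Set {y : α // y ∈ genSub BS}) := by
  classical
  set M : Finset α := B.image Subtype.val with hM
  have hMBS : ∀ b ∈ (↑M : Set α), b ∈ BS := by
    intro b hb
    obtain ⟨η, hη, rfl⟩ := Finset.mem_image.1 hb
    exact (mem_atoms_genSub hLG hBS η).1 (hBat hη)
  have hMx : (↑M : Set α) ⊆ Set.Iic (ξ:α) := by
    intro b hb
    obtain ⟨η, hη, rfl⟩ := Finset.mem_image.1 hb
    exact hBle hη
  obtain ⟨y, ⟨hyx, hyj⟩, hyu⟩ := HJ_of_hLG hLG M (ξ:α) hMx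
  have hMQ : ∀ s ∈ (↑M : Set α), s ∈ genSub BS := fun s hs => mem_genSub_of_mem (hMBS s hs)
  have hq : ∀ z ∈ joinSet (↑M : Set α), z ∈ genSub BS :=
    fun z hz => Set.mem_insert_iff.2 (Or.inr ⟨↑M, fun s hs => hMBS s hs, hz⟩)
  have hyQ : y ∈ genSub BS := hq y hyj
  have hBset : (↑B : Set {y : α // y ∈ genSub BS})
      = {η : {y : α // y ∈ genSub BS} | ↑η ∈ (↑M : Set α)} := by
    ext η
    simp only [Finset.mem_coe, Set.mem_setOf_eq, hM, Finset.coe_image, Set.mem_image,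
      Finset.mem_coe]
    constructor
    · intro h; exact ⟨η, h, rfl⟩
    · rintro ⟨η', hη', h⟩
      rwa [← Subtype.ext h]
  have hiff := fun (η : {y : α // y ∈ genSub BS}) =>
    sub_joinSet_iff_of_joinClosed (p := fun y => y ∈ genSub BS) hMQ hq η
  refine ⟨⟨y, hyQ⟩, ⟨Subtype.coe_le_coe.1 hyx, ?_⟩, ?_⟩
  · rw [hBset]
    exact (hiff ⟨y, hyQ⟩).2 hyj
  · rintro η' ⟨hle', hj'⟩
    rw [hBset] at hj'
    have : (η' : α) ∈ joinSet (↑M : Set α) := (hiff η').1 hj'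
    exact Subtype.ext (hyu (η' : α) ⟨Subtype.coe_le_coe.2 hle', this⟩)

lemma rk_upper (hLG : IsLocallyGeometric α) {a : α} (ha : a ∈ atoms α)
    (ξ : {y : α // a ≤ y}) : rk (ξ : α) = rk ξ + 1 := by
  by_cases hxa : (ξ : α) = a
  · have hb : ξ = (⊥ : {y : α // a ≤ y}) := Subtype.ext hxa
    rw [hb, rk_bot]
    rw [show ((⊥ : {y : α // a ≤ y}) : α) = a from rfl]
    exact ha
  · have hax : a < (ξ:α) := lt_of_le_of_ne ξ.2 (Ne.symm hxa)
    set S := {w : α | a ≤ w ∧ w < (ξ:α)} with hS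
    have hrkξ : rk ξ = (S.chainHeight (· < ·)).toNat := rk_subtype ξ
    have habot : a ≠ ⊥ := atom_ne_bot ha
    -- lower bound : cover chain from a to x
    obtain ⟨l, hl1, hl2, hl3, hl4⟩ := exists_cover_chain hLG.1 ξ.2
    have hlt := coverChain_chain'_lt hl1
    set L₀ := (a :: l).dropLast with hL₀
    have hmem : ∀ z ∈ L₀, z ∈ S := by
      intro z hz
      have hzlt : z < (ξ:α) := by
        have := lt_getLast_of_mem_dropLast hlt (List.cons_ne_nil _ l) hz
        rwa [hl2] at this
      rcases List.mem_cons.1 (List.dropLast_subset _ hz) with rfl | hzl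
      · exact ⟨le_rfl, hzlt⟩
      · exact ⟨(hl4 z hzl).1.le, hzlt⟩
    have hchain : List.Chain' (· < ·) L₀ := by
      have h := List.dropLast_append_getLast (l := a :: l) (List.cons_ne_nil _ l)
      rw [← h] at hlt
      exact hlt.left_of_append
    have hlen := Set.length_le_chainHeight_of_mem_subchain (⟨hchain, hmem⟩ : L₀ ∈ S.subchain)
    have hlenL₀ : L₀.length = l.length := by
      rw [hL₀, List.length_dropLast, List.length_cons]
      omega
    rw [hlenL₀] at hlen
    have hge := le_toNat_of_cast_le hlen (chainHeight_ne_top _)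
    -- upper bound2 : extend chains in S by ⊥
    obtain ⟨l', hl'sub, hl'len⟩ :=
      Set.exists_chain_of_le_chainHeight S (le_of_eq (ENat.coe_toNat (chainHeight_ne_top S)))
    have hup : (((S.chainHeight (· < ·)).toNat + 1 : ℕ) : ℕ∞) ≤ (Set.Iio (ξ:α)).chainHeight (· < ·) := by
      have hsub2 : (⊥:α) :: l' ∈ (Set.Iio (ξ:α)).subchain := by
        constructor
        · rw [List.Chain', List.isChain_cons]
          refine ⟨?_, hl'sub.1⟩
          intro y hy
          have hyS : y ∈ S := hl'sub.2 y (List.mem_of_mem_head? hy)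
          exact lt_of_lt_of_le (lt_of_le_of_ne bot_le (Ne.symm habot)) hyS.1
        · intro w hw
          rcases List.mem_cons.1 hw with rfl | hw'
          · exact lt_trans (lt_of_le_of_ne bot_le (Ne.symm habot)) hax
          · exact (hl'sub.2 w hw').2
      have := Set.length_le_chainHeight_of_mem_subchain hsub2
      rw [List.length_cons, hl'len] at this
      exact_mod_cast this
    have hup2 := le_toNat_of_cast_le hup (chainHeight_ne_top _)
    have h1 : rk a = 1 := ha
    have hrkx : rk (ξ:α) = ((Set.Iio (ξ:α)).chainHeight (· < ·)).toNat := rk_def _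
    have hcmp := rk_strictMono hax
    omega

end Geometric

end PosetArr
namespace PosetArr

open Polynomial

section Upper

variable {α : Type} [PartialOrder α] [Fintype α] [OrderBot α]

lemma map_filter_le (a : α) (ξ : {y : α // a ≤ y}) :
    (Finset.univ.filter (fun η : {y : α // a ≤ y} => η ≤ ξ)).map
      ⟨Subtype.val, Subtype.val_injective⟩
    = Finset.univ.filter (fun y : α => a ≤ y ∧ y ≤ (ξ:α)) := by
  ext y
  simp only [Finset.mem_map, Finset.mem_filter, Finset.mem_univ, true_and,
    Function.Embedding.coeFn_mk]
  constructor
  · rintro ⟨η, hη, rfl⟩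
    exact ⟨η.2, hη⟩
  · rintro ⟨hay, hyx⟩
    exact ⟨⟨y, hay⟩, hyx, rfl⟩

lemma crosscut_rel (hLG : IsLocallyGeometric α) {a : α} (ha : a ∈ atoms α)
    (ξ : {y : α // a ≤ y}) :
    mob (⊥ : {y : α // a ≤ y}) ξ = ∑ S ∈ ((atomsF α).erase a).powerset,
      (-1 : ℤ) ^ S.card * (if (ξ:α) ∈ joinSet (↑(insert a S) : Set α) then 1 else 0) := by
  have hbotval : ((⊥ : {y : α // a ≤ y}) : α) = a := rfl
  have key : ∀ ξ : {y : α // a ≤ y},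
      ∑ η ∈ Finset.univ.filter (fun η : {y : α // a ≤ y} => η ≤ ξ),
        (∑ S ∈ ((atomsF α).erase a).powerset, (-1 : ℤ) ^ S.card *
          (if (η:α) ∈ joinSet (↑(insert a S) : Set α) then 1 else 0))
      = if ξ = ⊥ then 1 else 0 := by
    intro ξ
    rw [Finset.sum_comm]
    have inner : ∀ S ∈ ((atomsF α).erase a).powerset,
        (∑ η ∈ Finset.univ.filter (fun η : {y : α // a ≤ y} => η ≤ ξ),
          (-1 : ℤ) ^ S.card *
            (if (η:α) ∈ joinSet (↑(insert a S) : Set α) then 1 else 0))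
        = (-1 : ℤ) ^ S.card * (if (↑S : Set α) ⊆ Set.Iic (ξ:α) then 1 else 0) := by
      intro S hS
      rw [← Finset.mul_sum]
      congr 1
      have hstep1 : ∑ η ∈ Finset.univ.filter (fun η : {y : α // a ≤ y} => η ≤ ξ),
          (if (η:α) ∈ joinSet (↑(insert a S) : Set α) then (1:ℤ) else 0)
          = ∑ y ∈ Finset.univ.filter (fun y : α => a ≤ y ∧ y ≤ (ξ:α)),
            (if y ∈ joinSet (↑(insert a S) : Set α) then (1:ℤ) else 0) := by
        rw [← map_filter_le a ξ, Finset.sum_map]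
        rfl
      have hstep2 : ∑ y ∈ Finset.univ.filter (fun y : α => a ≤ y ∧ y ≤ (ξ:α)),
          (if y ∈ joinSet (↑(insert a S) : Set α) then (1:ℤ) else 0)
          = ∑ y ∈ Finset.univ.filter (fun y : α => y ≤ (ξ:α)),
            (if y ∈ joinSet (↑(insert a S) : Set α) then (1:ℤ) else 0) := by
        apply Finset.sum_subset
        · intro y hy
          simp only [Finset.mem_filter, Finset.mem_univ, true_and] at hy ⊢
          exact hy.2
        · intro y hy hyn
          simp only [Finset.mem_filter, Finset.mem_univ, true_and] at hy hyn
          rw [if_neg]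
          intro hj
          exact hyn ⟨hj.1 (by rw [Finset.coe_insert]; exact Set.mem_insert a _), hy⟩
      rw [hstep1, hstep2]
      -- now identical to the crosscut count
      have hins : (↑(insert a S) : Set α) ⊆ atoms α := by
        intro b hb
        rw [Finset.coe_insert] at hb
        rcases hb with rfl | hb
        · exact ha
        · have := Finset.mem_powerset.1 hS hb
          have := Finset.mem_erase.1 this
          simpa [atomsF] using this.2
      by_cases hBx : (↑(insert a S) : Set α) ⊆ Set.Iic (ξ:α)
      · have hBx' : (↑S : Set α) ⊆ Set.Iic (ξ:α) := by
          intro s hs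
          exact hBx (by rw [Finset.coe_insert]; exact Set.mem_insert_of_mem a hs)
        rw [if_pos hBx']
        obtain ⟨y₀, hy₀, huniq⟩ := HJ_of_hLG hLG (insert a S) (ξ:α) hBx
        have hfe : (Finset.univ.filter (fun y : α => y ≤ (ξ:α))).filter
            (fun y => y ∈ joinSet (↑(insert a S) : Set α)) = {y₀} := by
          ext z
          simp only [Finset.mem_filter, Finset.mem_univ, true_and, Finset.mem_singleton]
          constructor
          · rintro ⟨h1, h2⟩; exact huniq z ⟨h1, h2⟩
          · rintro rfl; exact ⟨hy₀.1, hy₀.2⟩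
        rw [← Finset.sum_filter, hfe, Finset.sum_singleton]
      · have hBx' : ¬ (↑S : Set α) ⊆ Set.Iic (ξ:α) := by
          intro h
          apply hBx
          rw [Finset.coe_insert]
          exact Set.insert_subset ξ.2 h
        rw [if_neg hBx']
        apply Finset.sum_eq_zero
        intro y hy
        simp only [Finset.mem_filter, Finset.mem_univ, true_and] at hy
        rw [if_neg]
        intro hjy
        obtain ⟨b, hbB, hbx⟩ := Set.not_subset.1 hBx
        exact hbx (le_trans (hjy.1 hbB) hy)
    rw [Finset.sum_congr rfl inner]
    have hsplit : ∀ S ∈ ((atomsF α).erase a).powerset,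
        (-1 : ℤ) ^ S.card * (if (↑S : Set α) ⊆ Set.Iic (ξ:α) then 1 else 0)
        = if (↑S : Set α) ⊆ Set.Iic (ξ:α) then (-1 : ℤ) ^ S.card else 0 := by
      intro S _; split_ifs <;> ring
    rw [Finset.sum_congr rfl hsplit, ← Finset.sum_filter]
    have hps : ((atomsF α).erase a).powerset.filter
          (fun S : Finset α => (↑S : Set α) ⊆ Set.Iic (ξ:α))
        = (((atomsF α).erase a).filter (fun b => b ≤ (ξ:α))).powerset := by
      ext S
      simp only [Finset.mem_filter, Finset.mem_powerset]
      constructor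
      · rintro ⟨h1, h2⟩ b hb
        exact Finset.mem_filter.2 ⟨h1 hb, h2 hb⟩
      · intro h
        constructor
        · intro b hb; exact (Finset.mem_filter.1 (h hb)).1
        · intro b hb; exact (Finset.mem_filter.1 (h hb)).2
    rw [hps, Finset.sum_powerset_neg_one_pow_card]
    have hiff : (((atomsF α).erase a).filter (fun b => b ≤ (ξ:α)) = ∅) ↔ ξ = ⊥ := by
      constructor
      · intro h
        by_contra hξ
        have hxa : (ξ:α) ≠ a := by
          intro h'
          exact hξ (Subtype.ext (h'.trans hbotval.symm))
        have hax : a < (ξ:α) := lt_of_le_of_ne ξ.2 (Ne.symm hxa)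
        obtain ⟨b, hb, hbx, hba⟩ := exists_other_atom_le hLG ha hax
        have : b ∈ ((atomsF α).erase a).filter (fun b => b ≤ (ξ:α)) := by
          simp only [Finset.mem_filter, Finset.mem_erase, atomsF, Finset.mem_univ, true_and]
          exact ⟨⟨hba, by simp [hb]⟩, hbx⟩
        rw [h] at this
        exact absurd this (Finset.notMem_empty b)
      · rintro rfl
        ext b
        simp only [Finset.mem_filter, Finset.mem_erase, Finset.notMem_empty, iff_false,
          not_and, atomsF, Finset.mem_univ, true_and, hbotval]
        rintro ⟨hba, hbat⟩ hble
        have hIio := mem_atoms_iff_Iio.1 ha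
        rcases eq_or_lt_of_le hble with h | h
        · exact hba h
        · have : b ∈ Set.Iio a := Set.mem_Iio.2 h
          rw [hIio] at this
          exact atom_ne_bot hbat this
    rw [if_congr hiff rfl rfl]
  exact (eq_mob_of_sum _ (fun x => (key x).trans (by congr!)) ξ).symm

end Upper

section CharPolyDegree

variable (γ : Type*) [PartialOrder γ] [Fintype γ] [OrderBot γ]

lemma rk_le_prk (x : γ) : rk x ≤ prk γ := Finset.le_sup (Finset.mem_univ x)

lemma charPoly_coeff_top : (charPoly γ).coeff (prk γ) = 1 := by
  unfold charPoly
  rw [Polynomial.finset_sum_coeff]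
  have hcoeff : ∀ x : γ,
      (Polynomial.C (mob (⊥:γ) x) * Polynomial.X ^ (prk γ - rk x)).coeff (prk γ)
      = if x = ⊥ then mob (⊥:γ) x else 0 := by
    intro x
    rw [Polynomial.coeff_C_mul, Polynomial.coeff_X_pow]
    have hle := rk_le_prk γ x
    by_cases hx : x = ⊥
    · subst hx
      rw [if_pos rfl, if_pos (by rw [rk_bot]; omega)]
      ring
    · rw [if_neg hx, if_neg, mul_zero]
      intro h
      apply hx
      rw [← rk_eq_zero_iff (γ := γ)]
      omega
  rw [Finset.sum_congr rfl (fun x _ => hcoeff x), Finset.sum_ite_eq' Finset.univ (⊥:γ)]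
  rw [if_pos (Finset.mem_univ _), mob_self]

lemma charPoly_degree_le : (charPoly γ).degree ≤ (prk γ : ℕ) := by
  unfold charPoly
  apply le_trans (Polynomial.degree_sum_le _ _)
  apply Finset.sup_le
  intro x _
  apply le_trans (Polynomial.degree_C_mul_X_pow_le _ _)
  exact_mod_cast Nat.cast_le.2 (Nat.sub_le _ _)

lemma charPoly_natDegree : (charPoly γ).natDegree = prk γ := by
  apply le_antisymm
  · exact Polynomial.natDegree_le_iff_degree_le.2 (charPoly_degree_le γ)
  · apply Polynomial.le_natDegree_of_ne_zero
    rw [charPoly_coeff_top]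
    exact one_ne_zero

lemma charPoly_monic : (charPoly γ).Monic := by
  unfold Polynomial.Monic Polynomial.leadingCoeff
  rw [charPoly_natDegree, charPoly_coeff_top]

end CharPolyDegree

section ProdXC

lemma prod_XsubC_monic (E : Multiset ℤ) : ((E.map fun e => X - C e).prod).Monic :=
  monic_multiset_prod_of_monic E (fun e => X - C e) (fun e _ => monic_X_sub_C e)

lemma prod_XsubC_natDegree (E : Multiset ℤ) :
    ((E.map fun e => X - C e).prod).natDegree = Multiset.card E := by
  rw [Polynomial.natDegree_multiset_prod_of_monic _ (fun f hf => by
    obtain ⟨e, _, rfl⟩ := Multiset.mem_map.1 hf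
    exact monic_X_sub_C e)]
  rw [Multiset.map_map]
  have h1 : ((fun p : Polynomial ℤ => p.natDegree) ∘ (fun e : ℤ => X - C e)) = fun _ => 1 :=
    funext fun x => Polynomial.natDegree_X_sub_C x
  rw [h1, Multiset.map_const', Multiset.sum_replicate, smul_eq_mul, mul_one]

end ProdXC

end PosetArr
namespace PosetArr

open Polynomial

section Expand

lemma charPoly_expand (γ : Type*) [PartialOrder γ] [Fintype γ] [OrderBot γ]
    (HJ : ∀ B : Finset γ, (↑B : Set γ) ⊆ atoms γ → ∀ x : γ, (↑B : Set γ) ⊆ Set.Iic x →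
      ∃! y : γ, y ≤ x ∧ y ∈ joinSet (↑B : Set γ)) :
    charPoly γ = ∑ B ∈ (atomsF γ).powerset, Polynomial.C ((-1:ℤ)^B.card) *
      (∑ x : γ, if x ∈ joinSet (↑B : Set γ)
        then (Polynomial.X : Polynomial ℤ)^(prk γ - rk x) else 0) := by
  unfold charPoly
  have hx : ∀ x : γ, Polynomial.C (mob ⊥ x) * (Polynomial.X : Polynomial ℤ)^(prk γ - rk x)
      = ∑ B ∈ (atomsF γ).powerset, Polynomial.C ((-1:ℤ)^B.card) *
        (if x ∈ joinSet (↑B : Set γ)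
          then (Polynomial.X : Polynomial ℤ)^(prk γ - rk x) else 0) := by
    intro x
    rw [crosscut HJ x, map_sum, Finset.sum_mul]
    apply Finset.sum_congr rfl
    intro B _
    rw [map_mul]
    split_ifs with h <;> simp
  rw [Finset.sum_congr rfl (fun x _ => hx x), Finset.sum_comm]
  exact Finset.sum_congr rfl fun B _ => (Finset.mul_sum _ _ _).symm

lemma sum_ite_join_subtype {γ : Type*} [PartialOrder γ] [Fintype γ]
    (p : γ → Prop) (f : γ → Polynomial ℤ) (J : Set γ) (hJ : ∀ x ∈ J, p x) :
    ∑ x : γ, (if x ∈ J then f x else 0)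
      = ∑ ξ : Subtype p, (if (ξ:γ) ∈ J then f ξ else 0) := by
  classical
  have h1 : ∑ x ∈ Finset.univ.filter (fun x : γ => p x), (if x ∈ J then f x else 0)
      = ∑ ξ : Subtype p, (if (↑ξ:γ) ∈ J then f ↑ξ else 0) :=
    Finset.sum_subtype _ (by simp) _
  rw [← h1]
  apply (Finset.sum_subset (Finset.filter_subset _ _) _).symm
  intro x _ hx
  simp only [Finset.mem_filter, Finset.mem_univ, true_and] at hx
  rw [if_neg (fun hxJ => hx (hJ x hxJ))]

end Expand

section DelRes

variable {α : Type} [po : PartialOrder α] [fin : Fintype α] [bo : OrderBot α]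

theorem deletion_restriction (hLG : IsLocallyGeometric α) {a : α} (ha : a ∈ atoms α)
    (hr' : prk {y : α // y ∈ genSub (atoms α \ {a})} ≤ prk α)
    (hr'' : prk {y : α // a ≤ y} + 1 ≤ prk α) :
    charPoly α
      = Polynomial.X ^ (prk α - prk {y : α // y ∈ genSub (atoms α \ {a})})
          * charPoly {y : α // y ∈ genSub (atoms α \ {a})}
        - Polynomial.X ^ (prk α - 1 - prk {y : α // a ≤ y})
          * charPoly {y : α // a ≤ y} := by
  classical
  set BS : Set α := atoms α \ {a} with hBSdef
  have hBS : BS ⊆ atoms α := Set.diff_subset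
  set r := prk α with hrdef
  set r' := prk {y : α // y ∈ genSub BS} with hr'def
  set r'' := prk {y : α // a ≤ y} with hr''def
  have ha𝒜 : a ∈ atomsF α := by simp [atomsF, ha]
  have hana : a ∉ (atomsF α).erase a := Finset.notMem_erase a _
  -- expansion of charPoly α
  have hexp := charPoly_expand α (fun B _ x hBx => HJ_of_hLG hLG B x hBx)
  rw [← hrdef] at hexp
  rw [← Finset.insert_erase ha𝒜, Finset.sum_powerset_insert hana] at hexp
  -- ===== the deleted part =====
  have hdel : ∑ B ∈ ((atomsF α).erase a).powerset, Polynomial.C ((-1:ℤ)^B.card) *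
        (∑ x : α, if x ∈ joinSet (↑B : Set α)
          then (Polynomial.X : Polynomial ℤ)^(r - rk x) else 0)
      = Polynomial.X ^ (r - r') * charPoly {y : α // y ∈ genSub BS} := by
    have hexp' := charPoly_expand {y : α // y ∈ genSub BS}
      (fun B hBat ξ hBle => HJ_genSub hLG hBS B hBat ξ hBle)
    rw [← hr'def] at hexp'
    rw [hexp', Finset.mul_sum]
    -- bijection between powersets
    apply Finset.sum_nbij' (i := fun B : Finset α => B.subtype (fun y => y ∈ genSub BS))
      (j := fun B' : Finset {y : α // y ∈ genSub BS} => B'.image Subtype.val)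
    · -- hi: maps into target
      intro B hB
      rw [Finset.mem_powerset] at hB ⊢
      intro η hη
      rw [Finset.mem_subtype] at hη
      have hmem : (η : α) ∈ BS := by
        have := hB hη
        rw [Finset.mem_erase] at this
        refine ⟨by simpa [atomsF] using this.2, by simp [this.1]⟩
      simp only [atomsF, Finset.mem_filter, Finset.mem_univ, true_and]
      exact (mem_atoms_genSub hLG hBS η).2 hmem
    · -- hj
      intro B' hB'
      rw [Finset.mem_powerset] at hB' ⊢
      intro b hb
      obtain ⟨η, hη, rfl⟩ := Finset.mem_image.1 hb
      have hmem : (η : α) ∈ BS := (mem_atoms_genSub hLG hBS η).1 (by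
        have := hB' hη
        simpa [atomsF] using this)
      rw [Finset.mem_erase]
      exact ⟨hmem.2, by simp [atomsF, hmem.1]⟩
    · -- left inverse : j (i B) = B
      intro B hB
      rw [Finset.mem_powerset] at hB
      ext b
      simp only [Finset.mem_image, Finset.mem_subtype]
      constructor
      · rintro ⟨η, hη, rfl⟩; exact hη
      · intro hb
        have hbBS : b ∈ BS := by
          have := hB hb
          rw [Finset.mem_erase] at this
          exact ⟨by simpa [atomsF] using this.2, by simp [this.1]⟩
        exact ⟨⟨b, mem_genSub_of_mem hbBS⟩, hb, rfl⟩
    · -- right inverse : i (j B') = B'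
      intro B' _
      ext η
      simp only [Finset.mem_subtype, Finset.mem_image]
      constructor
      · rintro ⟨η', hη', h⟩
        rwa [← Subtype.ext h]
      · intro h; exact ⟨η, h, rfl⟩
    · -- main equality
      intro B hB
      rw [Finset.mem_powerset] at hB
      set B' : Finset {y : α // y ∈ genSub BS} := B.subtype (fun y => y ∈ genSub BS) with hB'def
      have hMBS : ∀ b ∈ (↑B : Set α), b ∈ BS := by
        intro b hb
        have := hB hb
        rw [Finset.mem_erase] at this
        exact ⟨by simpa [atomsF] using this.2, by simp [this.1]⟩
      have hq : ∀ z ∈ joinSet (↑B : Set α), z ∈ genSub BS :=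
        fun z hz => Set.mem_insert_iff.2 (Or.inr ⟨↑B, fun s hs => hMBS s hs, hz⟩)
      have hcard : B'.card = B.card := by
        rw [hB'def, Finset.card_subtype, Finset.filter_true_of_mem]
        intro b hb
        exact mem_genSub_of_mem (hMBS b hb)
      have hBset : (↑B' : Set {y : α // y ∈ genSub BS})
          = {η : {y : α // y ∈ genSub BS} | ↑η ∈ (↑B : Set α)} := by
        ext η
        simp [hB'def, Finset.mem_subtype]
      have hinner : (∑ x : α, if x ∈ joinSet (↑B : Set α)
            then (Polynomial.X : Polynomial ℤ)^(r - rk x) else 0)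
          = ∑ ξ : {y : α // y ∈ genSub BS}, (if ξ ∈ joinSet (↑B' : Set _)
            then (Polynomial.X : Polynomial ℤ)^(r - r') * Polynomial.X^(r' - rk ξ) else 0) := by
        rw [sum_ite_join_subtype (fun y => y ∈ genSub BS) _ _ hq]
        apply Finset.sum_congr rfl
        intro ξ _
        have hjiff : (ξ:α) ∈ joinSet (↑B : Set α) ↔ ξ ∈ joinSet (↑B' : Set _) := by
          rw [hBset]
          exact (sub_joinSet_iff_of_joinClosed (p := fun y => y ∈ genSub BS)
            (fun s hs => mem_genSub_of_mem (hMBS s hs)) hq ξ).symm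
        rw [if_congr hjiff rfl rfl]
        split_ifs with h
        · rw [← pow_add]
          congr 1
          have h1 : rk ξ = rk (ξ:α) := rk_genSub hLG hBS ξ
          have h2 : rk ξ ≤ r' := rk_le_prk _ ξ
          omega
        · rfl
      rw [hinner, hcard]
      simp only [Finset.mul_sum]
      apply Finset.sum_congr rfl
      intro ξ _
      split_ifs with h
      · ring
      · ring
  -- ===== the restriction part =====
  have hres : ∑ S ∈ ((atomsF α).erase a).powerset, Polynomial.C ((-1:ℤ)^(insert a S).card) *
        (∑ x : α, if x ∈ joinSet (↑(insert a S) : Set α)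
          then (Polynomial.X : Polynomial ℤ)^(r - rk x) else 0)
      = - (Polynomial.X ^ (r - 1 - r'') * charPoly {y : α // a ≤ y}) := by
    have hchar'' : charPoly {y : α // a ≤ y}
        = ∑ S ∈ ((atomsF α).erase a).powerset, Polynomial.C ((-1:ℤ)^S.card) *
          (∑ ξ : {y : α // a ≤ y}, if (ξ:α) ∈ joinSet (↑(insert a S) : Set α)
            then (Polynomial.X : Polynomial ℤ)^(r'' - rk ξ) else 0) := by
      unfold charPoly
      rw [← hr''def]
      have hx : ∀ ξ : {y : α // a ≤ y},
          Polynomial.C (mob ⊥ ξ) * (Polynomial.X : Polynomial ℤ)^(r'' - rk ξ)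
          = ∑ S ∈ ((atomsF α).erase a).powerset, Polynomial.C ((-1:ℤ)^S.card) *
            (if (ξ:α) ∈ joinSet (↑(insert a S) : Set α)
              then (Polynomial.X : Polynomial ℤ)^(r'' - rk ξ) else 0) := by
        intro ξ
        rw [crosscut_rel hLG ha ξ, map_sum, Finset.sum_mul]
        apply Finset.sum_congr rfl
        intro S _
        rw [map_mul]
        split_ifs with h <;> simp
      rw [Finset.sum_congr rfl (fun ξ _ => hx ξ), Finset.sum_comm]
      exact Finset.sum_congr rfl fun S _ => (Finset.mul_sum _ _ _).symm
    rw [hchar'', Finset.mul_sum, ← Finset.sum_neg_distrib]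
    apply Finset.sum_congr rfl
    intro S hS
    have haS : a ∉ S := by
      intro h
      exact hana (Finset.mem_powerset.1 hS h)
    have hcard : (insert a S).card = S.card + 1 := Finset.card_insert_of_notMem haS
    have hinner : (∑ x : α, if x ∈ joinSet (↑(insert a S) : Set α)
          then (Polynomial.X : Polynomial ℤ)^(r - rk x) else 0)
        = ∑ ξ : {y : α // a ≤ y}, (if (ξ:α) ∈ joinSet (↑(insert a S) : Set α)
          then (Polynomial.X : Polynomial ℤ)^(r - rk (ξ:α)) else 0) := by
      apply sum_ite_join_subtype (fun y => a ≤ y)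
        (f := fun x => (Polynomial.X : Polynomial ℤ)^(r - rk x))
      intro x hx
      exact hx.1 (by rw [Finset.coe_insert]; exact Set.mem_insert a _)
    rw [hinner, hcard]
    have hsum : ∀ ξ : {y : α // a ≤ y},
        Polynomial.C ((-1:ℤ)^(S.card+1)) * (if (ξ:α) ∈ joinSet (↑(insert a S) : Set α)
          then (Polynomial.X : Polynomial ℤ)^(r - rk (ξ:α)) else 0)
        = -(Polynomial.X ^ (r - 1 - r'') * (Polynomial.C ((-1:ℤ)^S.card) *
          (if (ξ:α) ∈ joinSet (↑(insert a S) : Set α)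
            then (Polynomial.X : Polynomial ℤ)^(r'' - rk ξ) else 0))) := by
      intro ξ
      have hrkξ : rk (ξ:α) = rk ξ + 1 := rk_upper hLG ha ξ
      have hrkle : rk ξ ≤ r'' := rk_le_prk _ ξ
      split_ifs with h
      · have hposexp : r - rk (ξ:α) = (r - 1 - r'') + (r'' - rk ξ) := by omega
        rw [hposexp, pow_add, pow_succ, mul_neg_one]
        rw [show ((-1:ℤ)^S.card * -(-1:ℤ)^0) = -((-1:ℤ)^S.card) by ring, Polynomial.C_neg]
        ring
      · ring
    rw [Finset.mul_sum, Finset.sum_congr rfl (fun ξ _ => hsum ξ), Finset.sum_neg_distrib,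
      Finset.mul_sum, Finset.mul_sum]
  rw [hexp, hdel, hres]
  ring

end DelRes

end PosetArr
namespace PosetArr
open Polynomial in
/-- Addition theorem for inductive posets. -/
theorem inductive_addition (α : Type) [po : PartialOrder α] [fin : Fintype α]
    [bo : OrderBot α] (hLG : IsLocallyGeometric α)
    (hA : (atoms α).Nonempty) (a : α) (ha : a ∈ atoms α)
    (E : Multiset ℤ) (hE : ∀ e ∈ E, 0 < e) (d : ℤ) (hd : 0 < d) :
    -- (a) `a` is not a separator
    ((prk α = prk {y : α // y ∈ genSub (atoms α \ {a})} →
      IsInductivePoset {y : α // a ≤ y} inferInstance inferInstance inferInstance →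
      charPoly {y : α // a ≤ y} = (E.map fun e => X - C e).prod →
      IsInductivePoset {y : α // y ∈ genSub (atoms α \ {a})}
        inferInstance inferInstance inferInstance →
      charPoly {y : α // y ∈ genSub (atoms α \ {a})} = ((d ::ₘ E).map fun e => X - C e).prod →
      IsInductivePoset α po fin bo ∧
        charPoly α = (((d + 1) ::ₘ E).map fun e => X - C e).prod)) ∧
    -- (b) `a` is a separator
    (prk α = prk {y : α // y ∈ genSub (atoms α \ {a})} + 1 →
      IsInductivePoset {y : α // a ≤ y} inferInstance inferInstance inferInstance →
      IsInductivePoset {y : α // y ∈ genSub (atoms α \ {a})}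
        inferInstance inferInstance inferInstance →
      charPoly {y : α // a ≤ y} = (E.map fun e => X - C e).prod →
      charPoly {y : α // y ∈ genSub (atoms α \ {a})} = (E.map fun e => X - C e).prod →
      IsInductivePoset α po fin bo ∧
        charPoly α = (((1 : ℤ) ::ₘ E).map fun e => X - C e).prod) := by
  constructor
  · -- (a)
    intro hprk hIP'' hchar'' hIP' hchar'
    have hr'' : prk {y : α // a ≤ y} = Multiset.card E := by
      have h1 := charPoly_natDegree {y : α // a ≤ y}
      rw [hchar'', prod_XsubC_natDegree] at h1
      omega
    have hr' : prk {y : α // y ∈ genSub (atoms α \ {a})} = Multiset.card E + 1 := by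
      have h1 := charPoly_natDegree {y : α // y ∈ genSub (atoms α \ {a})}
      rw [hchar', prod_XsubC_natDegree, Multiset.card_cons] at h1
      omega
    have hdvd : charPoly {y : α // a ≤ y} ∣
        charPoly {y : α // y ∈ genSub (atoms α \ {a})} := by
      rw [hchar', hchar'', Multiset.map_cons, Multiset.prod_cons]
      exact Dvd.intro_left _ rfl
    refine ⟨IsInductivePoset.step α hLG a ha hIP'' hIP' hdvd, ?_⟩
    have hDR := deletion_restriction hLG ha (by omega) (by omega)
    rw [hDR, hchar', hchar'']
    rw [show prk α - prk {y : α // y ∈ genSub (atoms α \ {a})} = 0 by omega,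
      show prk α - 1 - prk {y : α // a ≤ y} = 0 by omega,
      pow_zero, one_mul]
    rw [Multiset.map_cons, Multiset.prod_cons, Multiset.map_cons, Multiset.prod_cons]
    rw [map_add, map_one]
    ring
  · -- (b)
    intro hprk hIP'' hIP' hchar'' hchar'
    have hr'' : prk {y : α // a ≤ y} = Multiset.card E := by
      have h1 := charPoly_natDegree {y : α // a ≤ y}
      rw [hchar'', prod_XsubC_natDegree] at h1
      omega
    have hr' : prk {y : α // y ∈ genSub (atoms α \ {a})} = Multiset.card E := by
      have h1 := charPoly_natDegree {y : α // y ∈ genSub (atoms α \ {a})}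
      rw [hchar', prod_XsubC_natDegree] at h1
      omega
    have hdvd : charPoly {y : α // a ≤ y} ∣
        charPoly {y : α // y ∈ genSub (atoms α \ {a})} := by
      rw [hchar', hchar'']
    refine ⟨IsInductivePoset.step α hLG a ha hIP'' hIP' hdvd, ?_⟩
    have hDR := deletion_restriction hLG ha (by omega) (by omega)
    rw [hDR, hchar', hchar'']
    rw [show prk α - prk {y : α // y ∈ genSub (atoms α \ {a})} = 1 by omega,
      show prk α - 1 - prk {y : α // a ≤ y} = 0 by omega,
      pow_zero, pow_one, one_mul]
    rw [Multiset.map_cons, Multiset.prod_cons]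
    rw [map_one]
    ring
end PosetArr
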